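/- Assume M is invertible and let ξ ∈ ℂ be such that Q(ξ) has n pairwise distinct eigenvalues σ₁,…,σₙ with eigenvectors x₁,…,xₙ, and such that for every i, writing Q'(ξ)x_i = Σ_ℓ α_{iℓ} x_ℓ in the basis x₁,…,xₙ, the diagonal coefficient α_{ii} is nonzero. Then the 2n²×2n² block matrix A(ξ) = [[I⊗Q(ξ) − Q(ξ)⊗I, 0],[I⊗Q'(ξ), I⊗Q(ξ) − Q(ξ)⊗I]] has rank 2n² − n. -/

import Mathlib

open Matrix
open scoped Kronecker

namespace ZGV5

variable {n : ℕ}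

/-- `Q(λ) = M⁻¹(L₀ + λL₁ + λ²L₂)`. -/
noncomputable def Q (L2 L1 L0 M : Matrix (Fin n) (Fin n) ℂ) (lam : ℂ) :
    Matrix (Fin n) (Fin n) ℂ :=
  M⁻¹ * (L0 + lam • L1 + lam ^ 2 • L2)

/-- `Q'(λ) = M⁻¹(L₁ + 2λL₂)`. -/
noncomputable def Q' (L2 L1 M : Matrix (Fin n) (Fin n) ℂ) (lam : ℂ) :
    Matrix (Fin n) (Fin n) ℂ :=
  M⁻¹ * (L1 + (2 * lam) • L2)

/-- `A(λ) = [[I⊗Q(λ) − Q(λ)⊗I, 0],[I⊗Q'(λ), I⊗Q(λ) − Q(λ)⊗I]]`. -/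
noncomputable def A (L2 L1 L0 M : Matrix (Fin n) (Fin n) ℂ) (lam : ℂ) :
    Matrix ((Fin n × Fin n) ⊕ (Fin n × Fin n)) ((Fin n × Fin n) ⊕ (Fin n × Fin n)) ℂ :=
  Matrix.fromBlocks
    ((1 : Matrix (Fin n) (Fin n) ℂ) ⊗ₖ Q L2 L1 L0 M lam
        - Q L2 L1 L0 M lam ⊗ₖ (1 : Matrix (Fin n) (Fin n) ℂ))
    0
    ((1 : Matrix (Fin n) (Fin n) ℂ) ⊗ₖ Q' L2 L1 M lam)
    ((1 : Matrix (Fin n) (Fin n) ℂ) ⊗ₖ Q L2 L1 L0 M lam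
        - Q L2 L1 L0 M lam ⊗ₖ (1 : Matrix (Fin n) (Fin n) ℂ))

/-- Auxiliary embedding of `ℂⁿ` into the double space, as the "diagonal" vectors of the
second block. -/
noncomputable def phi (n : ℕ) :
    (Fin n → ℂ) →ₗ[ℂ] (((Fin n × Fin n) ⊕ (Fin n × Fin n)) → ℂ) where
  toFun c := Sum.elim 0 (fun p => if p.1 = p.2 then c p.1 else 0)
  map_add' c d := by
    funext q
    rcases q with p | p
    · simp
    · by_cases h : p.1 = p.2 <;> simp [h]
  map_smul' a c := by
    funext q
    rcases q with p | p
    · simp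
    · by_cases h : p.1 = p.2 <;> simp [h]

theorem phi_injective (n : ℕ) : Function.Injective (phi n) := by
  rw [injective_iff_map_eq_zero]
  intro c hc
  funext i
  have := congrFun hc (Sum.inr (i, i))
  simpa [phi] using this

set_option maxHeartbeats 1000000 in
/-- If `Q(ξ)` has `n` pairwise distinct eigenvalues with eigenvectors `x₁,…,xₙ`,
and for each `i` the diagonal coefficient `α_{ii}` of `Q'(ξ)x_i` in the basis
`x₁,…,xₙ` is nonzero, then `rank(A(ξ)) = 2n² − n`. -/
theorem rank_A_eq
    (n : ℕ) (hn : 1 ≤ n) (L2 L1 L0 M : Matrix (Fin n) (Fin n) ℂ)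
    (hM : IsUnit M) (ξ : ℂ)
    (σ : Fin n → ℂ) (x : Fin n → (Fin n → ℂ))
    (hdist : Function.Injective σ)
    (hx : ∀ i, x i ≠ 0)
    (hQ : ∀ i, Q L2 L1 L0 M ξ *ᵥ x i = σ i • x i)
    (hdiag : ∀ (i : Fin n) (α : Fin n → ℂ),
      Q' L2 L1 M ξ *ᵥ x i = ∑ ℓ, α ℓ • x ℓ → α i ≠ 0) :
    (A L2 L1 L0 M ξ).rank = 2 * n ^ 2 - n := by
  classical
  haveI : Nonempty (Fin n) := ⟨⟨0, hn⟩⟩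
  set Qξ := Q L2 L1 L0 M ξ with hQξdef
  set Q'ξ := Q' L2 L1 M ξ with hQ'ξdef
  -- the eigenvectors form a basis
  have hev : ∀ i, Module.End.HasEigenvector (Matrix.mulVecLin Qξ) (σ i) (x i) := by
    intro i
    rw [Module.End.hasEigenvector_iff]
    refine ⟨?_, hx i⟩
    rw [Module.End.mem_eigenspace_iff]
    simpa [Matrix.mulVecLin_apply] using hQ i
  have hli : LinearIndependent ℂ x :=
    Module.End.eigenvectors_linearIndependent' _ σ hdist x hev
  have hcard : Fintype.card (Fin n) = Module.finrank ℂ (Fin n → ℂ) := by simp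
  let b : Module.Basis (Fin n) ℂ (Fin n → ℂ) := basisOfLinearIndependentOfCardEqFinrank hli hcard
  have hb : ⇑b = x := coe_basisOfLinearIndependentOfCardEqFinrank _ _
  set X : Matrix (Fin n) (Fin n) ℂ := (Pi.basisFun ℂ (Fin n)).toMatrix x with hXdef
  have hXe : ∀ i j, X i j = x j i := by
    intro i j
    simp [hXdef, Module.Basis.toMatrix_apply]
  have hXinv : Invertible X := by
    rw [hXdef, ← hb]
    exact (Pi.basisFun ℂ (Fin n)).invertibleToMatrix b
  have hXX1 : X * X⁻¹ = 1 := Matrix.mul_inv_of_invertible X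
  -- diagonalization
  set D : Matrix (Fin n) (Fin n) ℂ := Matrix.diagonal σ with hDdef
  set C : Matrix (Fin n) (Fin n) ℂ := X⁻¹ * Q'ξ * X with hCdef
  have hQX : Qξ * X = X * D := by
    ext k i
    have h1 := congrFun (hQ i) k
    simp only [Matrix.mulVec, dotProduct, Pi.smul_apply, smul_eq_mul] at h1
    rw [hDdef, Matrix.mul_diagonal, hXe, Matrix.mul_apply]
    simp only [hXe]
    rw [h1, mul_comm]
  have hQ'X : Q'ξ * X = X * C := by
    rw [hCdef, ← Matrix.mul_assoc, ← Matrix.mul_assoc, hXX1, Matrix.one_mul]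
  have hCii : ∀ i, C i i ≠ 0 := by
    intro i
    refine hdiag i (fun l => C l i) ?_
    funext k
    have h1 : (Q'ξ * X) k i = (X * C) k i := by rw [hQ'X]
    simp only [Matrix.mul_apply, hXe] at h1
    simp only [Finset.sum_apply, Pi.smul_apply, smul_eq_mul]
    show (Q'ξ *ᵥ x i) k = _
    simp only [Matrix.mulVec, dotProduct]
    rw [h1]
    exact Finset.sum_congr rfl fun l _ => mul_comm _ _
  -- Kronecker similarity
  set d : Fin n × Fin n → ℂ := fun p => σ p.2 - σ p.1 with hddef
  have hd0 : ∀ p : Fin n × Fin n, p.1 ≠ p.2 → d p ≠ 0 := by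
    intro p hp h
    exact hp (hdist (sub_eq_zero.mp h)).symm
  set Δ : Matrix (Fin n × Fin n) (Fin n × Fin n) ℂ :=
    (1 : Matrix (Fin n) (Fin n) ℂ) ⊗ₖ D - D ⊗ₖ (1 : Matrix (Fin n) (Fin n) ℂ) with hΔdef
  have hΔdiag : Δ = Matrix.diagonal d := by
    rw [hΔdef, hDdef, ← Matrix.diagonal_one, Matrix.diagonal_kronecker_diagonal,
      Matrix.diagonal_kronecker_diagonal, Matrix.diagonal_sub]
    congr 1
    funext p
    simp [hddef]
  set XX : Matrix (Fin n × Fin n) (Fin n × Fin n) ℂ := X ⊗ₖ X with hXXdef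
  have hXXdet : IsUnit XX.det := by
    rw [hXXdef, Matrix.det_kronecker]
    exact ((X.isUnit_det_of_invertible).pow _).mul ((X.isUnit_det_of_invertible).pow _)
  have hKXX : ((1 : Matrix (Fin n) (Fin n) ℂ) ⊗ₖ Qξ - Qξ ⊗ₖ 1) * XX = XX * Δ := by
    rw [hXXdef, hΔdef, Matrix.sub_mul, Matrix.mul_sub, ← Matrix.mul_kronecker_mul,
      ← Matrix.mul_kronecker_mul, ← Matrix.mul_kronecker_mul, ← Matrix.mul_kronecker_mul,
      Matrix.one_mul, Matrix.mul_one, hQX]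
  have hCXX : ((1 : Matrix (Fin n) (Fin n) ℂ) ⊗ₖ Q'ξ) * XX = XX * ((1 : Matrix (Fin n) (Fin n) ℂ) ⊗ₖ C) := by
    rw [hXXdef, ← Matrix.mul_kronecker_mul, ← Matrix.mul_kronecker_mul,
      Matrix.one_mul, Matrix.mul_one, hQ'X]
  set P : Matrix ((Fin n × Fin n) ⊕ (Fin n × Fin n)) ((Fin n × Fin n) ⊕ (Fin n × Fin n)) ℂ :=
    Matrix.fromBlocks XX 0 0 XX with hPdef
  set B : Matrix ((Fin n × Fin n) ⊕ (Fin n × Fin n)) ((Fin n × Fin n) ⊕ (Fin n × Fin n)) ℂ :=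
    Matrix.fromBlocks Δ 0 ((1 : Matrix (Fin n) (Fin n) ℂ) ⊗ₖ C) Δ with hBdef
  have hPdet : IsUnit P.det := by
    rw [hPdef, Matrix.det_fromBlocks_zero₁₂]
    exact hXXdet.mul hXXdet
  have hAP : A L2 L1 L0 M ξ * P = P * B := by
    rw [A, hPdef, hBdef, Matrix.fromBlocks_multiply, Matrix.fromBlocks_multiply]
    rw [← hQξdef, ← hQ'ξdef]
    simp only [Matrix.mul_zero, Matrix.zero_mul, add_zero, zero_add]
    rw [hKXX, hCXX]
  have hrankB : (A L2 L1 L0 M ξ).rank = B.rank := by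
    calc (A L2 L1 L0 M ξ).rank = (A L2 L1 L0 M ξ * P).rank :=
          (Matrix.rank_mul_eq_left_of_isUnit_det P _ hPdet).symm
      _ = (P * B).rank := by rw [hAP]
      _ = B.rank := Matrix.rank_mul_eq_right_of_isUnit_det P B hPdet
  -- the kernel of B equals the range of phi
  have hker : LinearMap.ker B.mulVecLin = LinearMap.range (phi n) := by
    ext z
    rw [LinearMap.mem_ker, Matrix.mulVecLin_apply]
    constructor
    · intro hz
      set u : Fin n × Fin n → ℂ := fun p => z (Sum.inl p) with hudef
      set v : Fin n × Fin n → ℂ := fun p => z (Sum.inr p) with hvdef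
      rw [hBdef, Matrix.fromBlocks_mulVec] at hz
      have h1 : ∀ p, d p * u p = 0 := by
        intro p
        have := congrFun hz (Sum.inl p)
        simpa [Matrix.zero_mulVec, hΔdiag, Matrix.mulVec_diagonal] using this
      have huoff : ∀ p : Fin n × Fin n, p.1 ≠ p.2 → u p = 0 := by
        intro p hp
        exact (mul_eq_zero.mp (h1 p)).resolve_left (hd0 p hp)
      have h2 : ∀ p, (((1 : Matrix (Fin n) (Fin n) ℂ) ⊗ₖ C) *ᵥ u) p + d p * v p = 0 := by
        intro p
        have := congrFun hz (Sum.inr p)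
        simp [hΔdiag, Matrix.mulVec_diagonal] at this; exact this
      have hCu : ∀ i j, (((1 : Matrix (Fin n) (Fin n) ℂ) ⊗ₖ C) *ᵥ u) (i, j) = C j i * u (i, i) := by
        intro i j
        calc (((1 : Matrix (Fin n) (Fin n) ℂ) ⊗ₖ C) *ᵥ u) (i, j)
            = ∑ k, ∑ l, (if i = k then (1 : ℂ) else 0) * (C j l * u (k, l)) := by
              simp only [Matrix.mulVec, dotProduct]
              rw [Fintype.sum_prod_type]
              refine Finset.sum_congr rfl fun k _ => Finset.sum_congr rfl fun l _ => ?_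
              simp [Matrix.one_apply, mul_assoc]
          _ = ∑ l, C j l * u (i, l) := by
              rw [Finset.sum_eq_single i (fun k _ hk => by simp [Ne.symm hk])
                (fun h => absurd (Finset.mem_univ i) h)]
              simp
          _ = C j i * u (i, i) :=
              Finset.sum_eq_single i
                (fun l _ hl => by rw [huoff (i, l) (fun h => hl h.symm), mul_zero])
                (fun h => absurd (Finset.mem_univ i) h)
      have hudiag : ∀ i, u (i, i) = 0 := by
        intro i
        have h3 := h2 (i, i)
        rw [hCu i i] at h3
        have : d (i, i) = 0 := by simp [hddef]
        rw [this, zero_mul, add_zero] at h3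
        exact (mul_eq_zero.mp h3).resolve_left (hCii i)
      have hu : u = 0 := by
        funext p
        obtain ⟨a, c⟩ := p
        by_cases h : a = c
        · subst h; exact hudiag a
        · exact huoff (a, c) h
      have hvoff : ∀ p : Fin n × Fin n, p.1 ≠ p.2 → v p = 0 := by
        intro p hp
        have h3 := h2 p
        rw [hu, Matrix.mulVec_zero] at h3
        simp only [Pi.zero_apply, zero_add] at h3
        exact (mul_eq_zero.mp h3).resolve_left (hd0 p hp)
      refine ⟨fun i => v (i, i), ?_⟩
      funext q
      rcases q with p | p
      · have hzu : z (Sum.inl p) = u p := rfl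
        simp only [phi, LinearMap.coe_mk, AddHom.coe_mk, Sum.elim_inl, Pi.zero_apply]
        rw [hzu, hu]
        rfl
      · obtain ⟨a, c⟩ := p
        have hzv : z (Sum.inr (a, c)) = v (a, c) := rfl
        simp only [phi, LinearMap.coe_mk, AddHom.coe_mk, Sum.elim_inr]
        rw [hzv]
        by_cases h : a = c
        · subst h; simp
        · rw [if_neg h, hvoff (a, c) h]
    · rintro ⟨c, rfl⟩
      show B *ᵥ Sum.elim 0 (fun p => if p.1 = p.2 then c p.1 else 0) = 0
      rw [hBdef, Matrix.fromBlocks_mulVec]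
      funext q
      rcases q with p | p
      · simp
      · simp only [Sum.elim_inr, Sum.elim_comp_inl, Sum.elim_comp_inr, Matrix.mulVec_zero,
          zero_add, Pi.add_apply, Pi.zero_apply]
        rw [hΔdiag, Matrix.mulVec_diagonal]
        obtain ⟨a, e⟩ := p
        by_cases h : a = e
        · subst h
          have hd : d (a, a) = 0 := by simp [hddef]
          simp [hd]
        · simp [h]
  have hkerrank : Module.finrank ℂ (LinearMap.ker B.mulVecLin) = n := by
    rw [hker, LinearMap.finrank_range_of_inj (phi_injective n)]
    simp
  have htot := LinearMap.finrank_range_add_finrank_ker B.mulVecLin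
  rw [hkerrank, Module.finrank_fintype_fun_eq_card] at htot
  have hcard2 : Fintype.card ((Fin n × Fin n) ⊕ (Fin n × Fin n)) = n * n + n * n := by simp
  rw [hcard2] at htot
  have hBr : B.rank = Module.finrank ℂ (LinearMap.range B.mulVecLin) := rfl
  rw [hrankB, hBr]
  have hsq : n ^ 2 = n * n := sq n
  omega

end ZGV5
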